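/- Assume (H1), (H2), let p, q ∈ [0,1] and λ > ‖β‖_∞ − μ₀. If φ ∈ X⁺ and ψ = (ψ₁,ψ₂,ψ₃) is the unique function such that each ψᵢ is absolutely continuous on [0,ω], μψ ∈ X, ψᵢ′(a) + (λ+μ(a))ψᵢ(a) = φᵢ(a) for a.e. a ∈ (0,ω) and i = 1,2,3, and ψ(0) = 𝓑ψ, then ψ ∈ X⁺; that is, the resolvent operator R(λ, A₁+A₂) : φ ↦ ψ is positive. -/

import Mathlib

open MeasureTheory Set

noncomputable section

open MeasureTheory Set

noncomputable section

/-- `M` is the essential supremum of `|f|` on `[0,ω]`. -/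
def IsEssSupOn (ω : ℝ) (f : ℝ → ℝ) (M : ℝ) : Prop :=
  (∀ᵐ a ∂(volume.restrict (Icc (0:ℝ) ω)), |f a| ≤ M) ∧
    ∀ C : ℝ, (∀ᵐ a ∂(volume.restrict (Icc (0:ℝ) ω)), |f a| ≤ C) → M ≤ C

/-- `m` is the essential infimum of `f` on `[0,ω]`. -/
def IsEssInfOn (ω : ℝ) (f : ℝ → ℝ) (m : ℝ) : Prop :=
  (∀ᵐ a ∂(volume.restrict (Icc (0:ℝ) ω)), m ≤ f a) ∧
    ∀ C : ℝ, (∀ᵐ a ∂(volume.restrict (Icc (0:ℝ) ω)), C ≤ f a) → C ≤ m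

/-- The nonlocal boundary operator `𝓑ψ = ∫₀^ω B(a)ψ(a)da` where `B(a)` has rows
`(β,(1−p)β,(1−q)β)`, `(0,pβ,0)`, `(0,0,qβ)`. -/
def Bvec (ω p q : ℝ) (β : ℝ → ℝ) (ψ : ℝ → Fin 3 → ℝ) : Fin 3 → ℝ :=
  ![∫ a in Icc (0:ℝ) ω, β a * (ψ a 0 + (1 - p) * ψ a 1 + (1 - q) * ψ a 2),
    ∫ a in Icc (0:ℝ) ω, p * (β a * ψ a 1),
    ∫ a in Icc (0:ℝ) ω, q * (β a * ψ a 2)]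

/-- `ψ = (ψ₁,ψ₂,ψ₃)` solves the resolvent problem for `A₁+A₂` at `λ = l` with datum `φ`:
each component is absolutely continuous on `[0,ω]` (primitive of an integrable `ψ'`),
`ψ, μψ ∈ L¹`, `ψᵢ′(a) + (l+μ(a))ψᵢ(a) = φᵢ(a)` a.e. and `ψ(0) = 𝓑ψ`. -/
def ResolventSol (ω p q l : ℝ) (β μf : ℝ → ℝ) (φ ψ : ℝ → Fin 3 → ℝ) : Prop :=
  ∃ ψ' : ℝ → Fin 3 → ℝ,
    IntegrableOn ψ' (Icc 0 ω) ∧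
    (∀ i : Fin 3, ∀ a ∈ Icc (0:ℝ) ω, ψ a i = ψ 0 i + ∫ s in (0:ℝ)..a, ψ' s i) ∧
    IntegrableOn ψ (Icc 0 ω) ∧
    IntegrableOn (fun a i => μf a * ψ a i) (Icc 0 ω) ∧
    (∀ i : Fin 3, ∀ᵐ a ∂(volume.restrict (Icc (0:ℝ) ω)),
      ψ' a i + (l + μf a) * ψ a i = φ a i) ∧
    ψ 0 = Bvec ω p q β ψ



lemma triangle_swap {b : ℝ} {g h : ℝ → ℝ}
    (hg : IntegrableOn g (Ioc 0 b)) (hh : IntegrableOn h (Ioc 0 b)) :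
    ∫ s in Ioc (0:ℝ) b, g s * ∫ u in Ioc (0:ℝ) s, h u
      = ∫ u in Ioc (0:ℝ) b, h u * ∫ s in Ioc u b, g s := by
  set ν := volume.restrict (Ioc (0:ℝ) b) with hν
  set D : Set (ℝ × ℝ) := {z | z.2 ≤ z.1} with hD
  have hDm : MeasurableSet D := measurableSet_le measurable_snd measurable_fst
  set H : ℝ × ℝ → ℝ := D.indicator (fun z => g z.1 * h z.2) with hH
  have hHmeas : AEStronglyMeasurable H (ν.prod ν) := by
    have h1 : AEStronglyMeasurable (fun z : ℝ × ℝ => g z.1) (ν.prod ν) := hg.aestronglyMeasurable.comp_fst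
    have h2 : AEStronglyMeasurable (fun z : ℝ × ℝ => h z.2) (ν.prod ν) := hh.aestronglyMeasurable.comp_snd
    exact (h1.mul h2).indicator hDm
  have hHint : Integrable H (ν.prod ν) := by
    refine Integrable.mono' (Integrable.mul_prod (Integrable.norm hg) (Integrable.norm hh)) hHmeas ?_
    refine Filter.Eventually.of_forall fun z => ?_
    by_cases hz : z ∈ D
    · rw [hH, indicator_of_mem hz, Real.norm_eq_abs, abs_mul, Real.norm_eq_abs, Real.norm_eq_abs]
    · rw [hH, indicator_of_notMem hz, norm_zero]
      positivity
  have swap : ∫ s, ∫ u, H (s, u) ∂ν ∂ν = ∫ u, ∫ s, H (s, u) ∂ν ∂ν :=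
    integral_integral_swap hHint
  have L : ∀ s ∈ Ioc (0:ℝ) b, (∫ u, H (s, u) ∂ν) = g s * ∫ u in Ioc (0:ℝ) s, h u := by
    intro s hs
    have e1 : (fun u => H (s, u)) = fun u => (Iic s).indicator (fun u => g s * h u) u := by
      funext u
      by_cases hu : u ≤ s
      · rw [hH, indicator_of_mem (show (s,u) ∈ D from hu),
          indicator_of_mem (show u ∈ Iic s from hu)]
      · rw [hH, indicator_of_notMem (show (s,u) ∉ D from hu),
          indicator_of_notMem (show u ∉ Iic s from hu)]
    rw [e1, hν, setIntegral_indicator measurableSet_Iic]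
    have e2 : Ioc (0:ℝ) b ∩ Iic s = Ioc 0 s := by
      ext x
      simp only [mem_inter_iff, mem_Ioc, mem_Iic]
      exact ⟨fun ⟨⟨h1, _⟩, h3⟩ => ⟨h1, h3⟩, fun ⟨h1, h2⟩ => ⟨⟨h1, h2.trans hs.2⟩, h2⟩⟩
    rw [e2, integral_const_mul]
  have R : ∀ u ∈ Ioc (0:ℝ) b, (∫ s, H (s, u) ∂ν) = h u * ∫ s in Ioc u b, g s := by
    intro u hu
    have e1 : (fun s => H (s, u)) = fun s => (Ici u).indicator (fun s => g s * h u) s := by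
      funext s
      by_cases hsu : u ≤ s
      · rw [hH, indicator_of_mem (show (s,u) ∈ D from hsu),
          indicator_of_mem (show s ∈ Ici u from hsu)]
      · rw [hH, indicator_of_notMem (show (s,u) ∉ D from hsu),
          indicator_of_notMem (show s ∉ Ici u from hsu)]
    rw [e1, hν, setIntegral_indicator measurableSet_Ici]
    have e2 : Ioc (0:ℝ) b ∩ Ici u = Icc u b := by
      ext x
      simp only [mem_inter_iff, mem_Ioc, mem_Icc, mem_Ici]
      exact ⟨fun ⟨⟨_, h2⟩, h3⟩ => ⟨h3, h2⟩, fun ⟨h1, h2⟩ => ⟨⟨lt_of_lt_of_le hu.1 h1, h2⟩, h1⟩⟩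
    rw [e2, integral_Icc_eq_integral_Ioc]
    rw [integral_mul_const, mul_comm]
  calc ∫ s in Ioc (0:ℝ) b, g s * ∫ u in Ioc (0:ℝ) s, h u
      = ∫ s, ∫ u, H (s, u) ∂ν ∂ν := by
        refine (setIntegral_congr_fun measurableSet_Ioc fun s hs => (L s hs)).symm
    _ = ∫ u, ∫ s, H (s, u) ∂ν ∂ν := swap
    _ = ∫ u in Ioc (0:ℝ) b, h u * ∫ s in Ioc u b, g s :=
        setIntegral_congr_fun measurableSet_Ioc fun u hu => (R u hu)

section Prim
set_option linter.unusedSectionVars false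
variable {f : ℝ → ℝ} (hm : Measurable f) (h0 : ∀ s, 0 ≤ f s) (hi : Integrable f)
include hm h0 hi

lemma Fmono : Monotone (fun s => ∫ u in Ioc (0:ℝ) s, f u) := by
  intro s t hst
  exact setIntegral_mono_set hi.integrableOn
    (Filter.Eventually.of_forall fun x => h0 x)
    ((Ioc_subset_Ioc_right hst).eventuallyLE)

lemma Fnonneg : ∀ s, 0 ≤ ∫ u in Ioc (0:ℝ) s, f u := fun s =>
  setIntegral_nonneg measurableSet_Ioc fun x _ => h0 x

lemma Fmeas : Measurable (fun s => ∫ u in Ioc (0:ℝ) s, f u) :=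
  (Fmono hm h0 hi).measurable

lemma primJint (n : ℕ) (b : ℝ) :
    IntegrableOn (fun s => f s * (∫ u in Ioc (0:ℝ) s, f u) ^ n) (Ioc 0 b) := by
  set F := fun s => ∫ u in Ioc (0:ℝ) s, f u with hF
  refine Integrable.mono' ((hi.integrableOn).const_mul (F b ^ n))
    ((hm.mul ((Fmeas hm h0 hi).pow_const n)).aestronglyMeasurable) ?_
  filter_upwards [ae_restrict_mem measurableSet_Ioc] with s hs
  rw [Real.norm_eq_abs, abs_of_nonneg (mul_nonneg (h0 s) (pow_nonneg (Fnonneg hm h0 hi s) n))]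
  rw [mul_comm (F b ^ n) (f s)]
  exact mul_le_mul_of_nonneg_left (pow_le_pow_left₀ (Fnonneg hm h0 hi _)
    (Fmono hm h0 hi hs.2) n) (h0 s)

lemma primJ (n : ℕ) (b : ℝ) :
    ∫ s in Ioc (0:ℝ) b, f s * (∫ u in Ioc (0:ℝ) s, f u) ^ n
      = (∫ u in Ioc (0:ℝ) b, f u) ^ (n + 1) / (n + 1) := by
  set F := fun s => ∫ u in Ioc (0:ℝ) s, f u with hF
  induction n generalizing b with
  | zero => simp
  | succ n ih =>
    have hsplit : ∀ u ∈ Ioc (0:ℝ) b,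
        ∫ s in Ioc u b, f s * F s ^ n = F b ^ (n+1) / (n+1) - F u ^ (n+1) / (n+1) := by
      intro u hu
      have hunion : Ioc (0:ℝ) u ∪ Ioc u b = Ioc 0 b := Ioc_union_Ioc_eq_Ioc hu.1.le hu.2
      have := setIntegral_union (Ioc_disjoint_Ioc_of_le le_rfl) measurableSet_Ioc
        (primJint hm h0 hi n u) (((primJint hm h0 hi n b)).mono_set (Ioc_subset_Ioc_left hu.1.le))
        (f := fun s => f s * F s ^ n) (μ := volume)
      rw [hunion] at this
      rw [ih b, ih u] at this
      linarith
    have key : ∫ s in Ioc (0:ℝ) b, f s * F s ^ (n+1)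
        = ∫ u in Ioc (0:ℝ) b, f u * (F b ^ (n+1)/(n+1) - F u ^ (n+1)/(n+1)) := by
      calc ∫ s in Ioc (0:ℝ) b, f s * F s ^ (n+1)
          = ∫ s in Ioc (0:ℝ) b, (f s * F s ^ n) * ∫ u in Ioc (0:ℝ) s, f u := by
            apply setIntegral_congr_fun measurableSet_Ioc
            intro s _
            show f s * F s ^ (n+1) = (f s * F s ^ n) * F s
            ring
        _ = ∫ u in Ioc (0:ℝ) b, f u * ∫ s in Ioc u b, f s * F s ^ n :=
            triangle_swap (primJint hm h0 hi n b) hi.integrableOn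
        _ = ∫ u in Ioc (0:ℝ) b, f u * (F b ^ (n+1)/(n+1) - F u ^ (n+1)/(n+1)) := by
            apply setIntegral_congr_fun measurableSet_Ioc
            intro u hu
            show f u * (∫ s in Ioc u b, f s * F s ^ n) = _
            rw [hsplit u hu]
    have expand : ∫ u in Ioc (0:ℝ) b, f u * (F b ^ (n+1)/(n+1) - F u ^ (n+1)/(n+1))
        = (F b ^ (n+1)/(n+1)) * F b - (∫ u in Ioc (0:ℝ) b, f u * F u ^ (n+1))/(n+1) := by
      have h1 : IntegrableOn (fun u => f u * (F b ^ (n+1)/((n:ℝ)+1))) (Ioc 0 b) :=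
        hi.integrableOn.mul_const _
      have h2 : IntegrableOn (fun u => (f u * F u ^ (n+1))/((n:ℝ)+1)) (Ioc 0 b) :=
        (primJint hm h0 hi (n+1) b).div_const _
      have e : (fun u => f u * (F b ^ (n+1)/((n:ℝ)+1) - F u ^ (n+1)/((n:ℝ)+1)))
          = fun u => f u * (F b ^ (n+1)/((n:ℝ)+1)) - (f u * F u ^ (n+1))/((n:ℝ)+1) := by
        funext u; ring
      rw [e, integral_sub h1 h2, integral_mul_const, integral_div]
      show (F b) * (F b ^ (n + 1) / ((n:ℝ) + 1)) - _ = _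
      ring
    have hT := key.trans expand
    have hn1 : ((n:ℝ)+1) ≠ 0 := by positivity
    have hn2 : ((n:ℝ)+1+1) ≠ 0 := by positivity
    have hmul : (∫ s in Ioc (0:ℝ) b, f s * F s ^ (n+1)) * ((n:ℝ)+1+1)
        = F b ^ (n+1) * F b := by
      field_simp at hT
      linarith
    have : F b ^ (n+1+1) = F b ^ (n+1) * F b := pow_succ _ _
    push_cast
    rw [eq_div_iff hn2, this]
    exact hmul

lemma primExpInt (b : ℝ) :
    IntegrableOn (fun s => f s * Real.exp (∫ u in Ioc (0:ℝ) s, f u)) (Ioc 0 b) := by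
  set F := fun s => ∫ u in Ioc (0:ℝ) s, f u with hF
  refine Integrable.mono' ((hi.integrableOn).const_mul (Real.exp (F b)))
    ((hm.mul (Real.measurable_exp.comp (Fmeas hm h0 hi))).aestronglyMeasurable) ?_
  filter_upwards [ae_restrict_mem measurableSet_Ioc] with s hs
  rw [Real.norm_eq_abs, abs_of_nonneg (mul_nonneg (h0 s) (Real.exp_pos _).le),
    mul_comm (Real.exp (F b))]
  exact mul_le_mul_of_nonneg_left (Real.exp_le_exp.mpr (Fmono hm h0 hi hs.2)) (h0 s)

lemma primExp (b : ℝ) :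
    ∫ s in Ioc (0:ℝ) b, f s * Real.exp (∫ u in Ioc (0:ℝ) s, f u)
      = Real.exp (∫ u in Ioc (0:ℝ) b, f u) - 1 := by
  set F := fun s => ∫ u in Ioc (0:ℝ) s, f u with hF
  have hexp : ∀ x : ℝ, Real.exp x = ∑' n : ℕ, x ^ n / n.factorial := by
    intro x
    rw [Real.exp_eq_exp_ℝ, NormedSpace.exp_eq_tsum_div]
  have hshift : ∀ x : ℝ, ∑' n : ℕ, x ^ (n+1) / (n+1).factorial = Real.exp x - 1 := by
    intro x
    have hsumm : Summable (fun n : ℕ => x ^ n / n.factorial) := Real.summable_pow_div_factorial x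
    have h2 := hsumm.tsum_eq_zero_add
    rw [hexp x, h2]
    simp
  have hpt : ∀ s : ℝ, f s * Real.exp (F s) = ∑' n : ℕ, f s * (F s ^ n / n.factorial) := by
    intro s; rw [hexp (F s), tsum_mul_left]
  have hint_n : ∀ n : ℕ, IntegrableOn (fun s => f s * (F s ^ n / (n.factorial : ℝ))) (Ioc 0 b) := by
    intro n
    have e : (fun s => f s * (F s ^ n / (n.factorial : ℝ))) = fun s => (f s * F s ^ n) / n.factorial := by
      funext s; ring
    rw [e]; exact (primJint hm h0 hi n b).div_const _
  have hval : ∀ n : ℕ, ∫ s in Ioc (0:ℝ) b, f s * (F s ^ n / (n.factorial : ℝ))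
      = F b ^ (n+1) / ((n+1).factorial : ℕ) := by
    intro n
    have e : (fun s => f s * (F s ^ n / (n.factorial : ℝ))) = fun s => (f s * F s ^ n) / n.factorial := by
      funext s; ring
    rw [e, integral_div, primJ hm h0 hi n b, div_div, Nat.factorial_succ]
    push_cast
    ring_nf
    simp only [hF]
    ring
  have hnn : ∀ n : ℕ, (0:ℝ) ≤ F b ^ (n+1) / ((n+1).factorial : ℕ) := by
    intro n
    have := Fnonneg hm h0 hi b
    positivity
  have hsumm2 : Summable (fun n : ℕ => F b ^ (n+1) / (((n+1).factorial : ℕ) : ℝ)) :=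
    (summable_nat_add_iff 1).mpr (Real.summable_pow_div_factorial (F b))
  have hlint : ∑' n : ℕ, ∫⁻ s in Ioc (0:ℝ) b, ‖f s * (F s ^ n / (n.factorial : ℝ))‖₊ ≠ ⊤ := by
    have h1 : ∀ n : ℕ, ∫⁻ s in Ioc (0:ℝ) b, ‖f s * (F s ^ n / (n.factorial : ℝ))‖₊
        = ENNReal.ofReal (F b ^ (n+1) / (((n+1).factorial : ℕ) : ℝ)) := by
      intro n
      rw [← hval n, ofReal_integral_eq_lintegral_ofReal (hint_n n)
        (Filter.Eventually.of_forall fun s => by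
          have := Fnonneg hm h0 hi s
          have := h0 s
          positivity)]
      refine lintegral_congr fun s => ?_
      rw [← Real.enorm_eq_ofReal]
      · rfl
      have := Fnonneg hm h0 hi s
      have := h0 s
      positivity
    simp_rw [h1]
    rw [← ENNReal.ofReal_tsum_of_nonneg hnn hsumm2]
    exact ENNReal.ofReal_ne_top
  calc ∫ s in Ioc (0:ℝ) b, f s * Real.exp (F s)
      = ∫ s in Ioc (0:ℝ) b, ∑' n : ℕ, f s * (F s ^ n / n.factorial) :=
        integral_congr_ae (Filter.Eventually.of_forall fun s => hpt s)
    _ = ∑' n : ℕ, ∫ s in Ioc (0:ℝ) b, f s * (F s ^ n / n.factorial) :=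
        integral_tsum (fun n => (hint_n n).aestronglyMeasurable) hlint
    _ = ∑' n : ℕ, F b ^ (n+1) / (((n+1).factorial : ℕ) : ℝ) := by
        exact tsum_congr fun n => hval n
    _ = Real.exp (F b) - 1 := hshift (F b)

lemma primProd {b : ℝ} (hb : 0 ≤ b) {w w' φ0 : ℝ → ℝ}
    (hw'i : IntegrableOn w' (Ioc 0 b))
    (hw : ∀ s ∈ Icc (0:ℝ) b, w s = w 0 + ∫ u in Ioc (0:ℝ) s, w' u)
    (hφi : IntegrableOn φ0 (Ioc 0 b))
    (hode : ∀ᵐ s ∂(volume.restrict (Ioc (0:ℝ) b)), w' s + f s * w s = φ0 s) :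
    w b * Real.exp (∫ u in Ioc (0:ℝ) b, f u)
      = w 0 + ∫ s in Ioc (0:ℝ) b, Real.exp (∫ u in Ioc (0:ℝ) s, f u) * φ0 s := by
  set F := fun s => ∫ u in Ioc (0:ℝ) s, f u with hF
  set ν := volume.restrict (Ioc (0:ℝ) b) with hν
  set w'' := (Ioc (0:ℝ) b).indicator w' with hw''
  have hw''i : Integrable w'' := hw'i.integrable_indicator measurableSet_Ioc
  set W := fun s => ∫ u in Ioc (0:ℝ) s, w'' u with hW
  have hWmeas : Measurable W := by
    have e : W = fun s => (∫ u in Ioc (0:ℝ) s, max (w'' u) 0)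
        - ∫ u in Ioc (0:ℝ) s, max (-w'' u) 0 := by
      funext s
      show ∫ u in Ioc (0:ℝ) s, w'' u = _
      rw [← integral_sub hw''i.pos_part.integrableOn hw''i.neg_part.integrableOn]
      exact integral_congr_ae (Filter.Eventually.of_forall fun u =>
        (max_zero_sub_max_neg_zero_eq_self (w'' u)).symm)
    rw [e]
    have m1 : Monotone (fun s => ∫ u in Ioc (0:ℝ) s, max (w'' u) 0) := by
      intro s t hst
      exact setIntegral_mono_set hw''i.pos_part.integrableOn
        (Filter.Eventually.of_forall fun x => le_max_right _ _)
        ((Ioc_subset_Ioc_right hst).eventuallyLE)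
    have m2 : Monotone (fun s => ∫ u in Ioc (0:ℝ) s, max (-w'' u) 0) := by
      intro s t hst
      exact setIntegral_mono_set hw''i.neg_part.integrableOn
        (Filter.Eventually.of_forall fun x => le_max_right _ _)
        ((Ioc_subset_Ioc_right hst).eventuallyLE)
    exact m1.measurable.sub m2.measurable
  have hWeq : ∀ s ∈ Icc (0:ℝ) b, W s = ∫ u in Ioc (0:ℝ) s, w' u := by
    intro s hs
    rw [hW]
    show ∫ u in Ioc (0:ℝ) s, (Ioc (0:ℝ) b).indicator w' u = _
    rw [setIntegral_indicator measurableSet_Ioc,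
      inter_eq_left.mpr (Ioc_subset_Ioc_right hs.2)]
  set A := ∫ u in Ioc (0:ℝ) b, |w' u| with hA
  have hWbd : ∀ s, |W s| ≤ A := by
    intro s
    have h1 : |W s| ≤ ∫ u in Ioc (0:ℝ) s, |w'' u| := by
      simpa [Real.norm_eq_abs] using
        norm_integral_le_integral_norm (μ := volume.restrict (Ioc (0:ℝ) s)) w''
    have h2 : ∫ u in Ioc (0:ℝ) s, |w'' u| ≤ ∫ u, |w'' u| :=
      setIntegral_le_integral hw''i.abs (Filter.Eventually.of_forall fun x => abs_nonneg _)
    have h3 : ∫ u, |w'' u| = A := by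
      rw [hA]
      have : (fun u => |w'' u|) = (Ioc (0:ℝ) b).indicator (fun u => |w' u|) := by
        funext u
        by_cases hu : u ∈ Ioc (0:ℝ) b
        · rw [indicator_of_mem hu]
          show |(Ioc (0:ℝ) b).indicator w' u| = _
          rw [indicator_of_mem hu]
        · rw [indicator_of_notMem hu]
          show |(Ioc (0:ℝ) b).indicator w' u| = _
          rw [indicator_of_notMem hu, abs_zero]
      rw [this, integral_indicator measurableSet_Ioc]
    linarith
  set wt := fun s => w 0 + W s with hwt
  have hwtmeas : Measurable wt := measurable_const.add hWmeas
  have hwW : ∀ᵐ s ∂ν, w s = wt s := by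
    rw [hν]
    filter_upwards [ae_restrict_mem measurableSet_Ioc] with s hs
    rw [hwt]
    show w s = w 0 + W s
    rw [hWeq s ⟨hs.1.le, hs.2⟩, hw s ⟨hs.1.le, hs.2⟩]
  have hexpFmeas : Measurable (fun s => Real.exp (F s)) :=
    Real.measurable_exp.comp (Fmeas hm h0 hi)
  have hexpFbd : ∀ᵐ s ∂ν, Real.exp (F s) ≤ Real.exp (F b) := by
    rw [hν]
    filter_upwards [ae_restrict_mem measurableSet_Ioc] with s hs
    exact Real.exp_le_exp.mpr (Fmono hm h0 hi hs.2)
  have I1 : Integrable (fun s => Real.exp (F s) * w' s) ν := by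
    refine Integrable.mono' (hw'i.norm.const_mul (Real.exp (F b)))
      (hexpFmeas.aestronglyMeasurable.mul hw'i.aestronglyMeasurable) ?_
    filter_upwards [hexpFbd] with s hs
    rw [Real.norm_eq_abs, abs_mul, abs_of_nonneg (Real.exp_pos _).le]
    exact mul_le_mul_of_nonneg_right hs (abs_nonneg _)
  have I2 : Integrable (fun s => f s * Real.exp (F s) * wt s) ν := by
    refine Integrable.mono' ((hi.integrableOn.const_mul (Real.exp (F b) * (|w 0| + A))))
      (((hm.mul hexpFmeas).mul hwtmeas).aestronglyMeasurable) ?_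
    filter_upwards [hexpFbd] with s hs
    rw [Real.norm_eq_abs, abs_mul, abs_mul, abs_of_nonneg (h0 s),
      abs_of_nonneg (Real.exp_pos _).le]
    have hwtb : |wt s| ≤ |w 0| + A := by
      have h1 : |w 0 + W s| ≤ |w 0| + |W s| := abs_add_le _ _
      have h2 := hWbd s
      show |w 0 + W s| ≤ _
      linarith
    calc f s * Real.exp (F s) * |wt s| ≤ f s * (Real.exp (F b) * (|w 0| + A)) := by
          have e1 : Real.exp (F s) * |wt s| ≤ Real.exp (F b) * (|w 0| + A) :=
            mul_le_mul hs hwtb (abs_nonneg _) (Real.exp_pos _).le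
          rw [mul_assoc]
          exact mul_le_mul_of_nonneg_left e1 (h0 s)
      _ = Real.exp (F b) * (|w 0| + A) * f s := by ring
  have I2' : Integrable (fun s => f s * Real.exp (F s) * w s) ν :=
    I2.congr (hwW.mono fun s hs =>
      show f s * Real.exp (F s) * wt s = f s * Real.exp (F s) * w s by rw [hs])
  have IW : Integrable (fun s => (f s * Real.exp (F s)) * W s) ν := by
    refine Integrable.mono' ((hi.integrableOn.const_mul (Real.exp (F b) * A)))
      (((hm.mul hexpFmeas).mul hWmeas).aestronglyMeasurable) ?_
    filter_upwards [hexpFbd] with s hs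
    rw [Real.norm_eq_abs, abs_mul, abs_mul, abs_of_nonneg (h0 s),
      abs_of_nonneg (Real.exp_pos _).le]
    calc f s * Real.exp (F s) * |W s| ≤ f s * (Real.exp (F b) * A) := by
          have e1 : Real.exp (F s) * |W s| ≤ Real.exp (F b) * A :=
            mul_le_mul hs (hWbd s) (abs_nonneg _) (Real.exp_pos _).le
          rw [mul_assoc]
          exact mul_le_mul_of_nonneg_left e1 (h0 s)
      _ = Real.exp (F b) * A * f s := by ring
  -- step 5 : tail exp integral
  have step5 : ∀ u ∈ Ioc (0:ℝ) b,
      ∫ s in Ioc u b, f s * Real.exp (F s) = Real.exp (F b) - Real.exp (F u) := by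
    intro u hu
    have hunion : Ioc (0:ℝ) u ∪ Ioc u b = Ioc 0 b := Ioc_union_Ioc_eq_Ioc hu.1.le hu.2
    have hsum := setIntegral_union (Ioc_disjoint_Ioc_of_le le_rfl) measurableSet_Ioc
      (primExpInt hm h0 hi u) ((primExpInt hm h0 hi b).mono_set (Ioc_subset_Ioc_left hu.1.le))
      (f := fun s => f s * Real.exp (F s)) (μ := volume)
    rw [hunion] at hsum
    have e1 : ∫ s in Ioc (0:ℝ) b, f s * Real.exp (F s) = Real.exp (F b) - 1 :=
      primExp hm h0 hi b
    have e2 : ∫ s in Ioc (0:ℝ) u, f s * Real.exp (F s) = Real.exp (F u) - 1 :=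
      primExp hm h0 hi u
    rw [e1, e2] at hsum
    linarith
  -- main computation
  have main : ∫ s in Ioc (0:ℝ) b, Real.exp (F s) * φ0 s
      = Real.exp (F b) * w b - w 0 := by
    have c1 : ∫ s in Ioc (0:ℝ) b, Real.exp (F s) * φ0 s
        = ∫ s, (Real.exp (F s) * w' s + f s * Real.exp (F s) * w s) ∂ν := by
      rw [hν]
      refine integral_congr_ae ?_
      refine (hode.mono fun s hs => ?_)
      show Real.exp (F s) * φ0 s = Real.exp (F s) * w' s + f s * Real.exp (F s) * w s
      rw [← hs]
      ring
    have c2 : ∫ s, (Real.exp (F s) * w' s + f s * Real.exp (F s) * w s) ∂ν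
        = (∫ s, Real.exp (F s) * w' s ∂ν) + ∫ s, f s * Real.exp (F s) * w s ∂ν :=
      integral_add I1 I2'
    have c3 : ∫ s, f s * Real.exp (F s) * w s ∂ν
        = ∫ s, ((f s * Real.exp (F s)) * w 0 + (f s * Real.exp (F s)) * W s) ∂ν := by
      refine integral_congr_ae (hwW.mono fun s hs => ?_)
      show f s * Real.exp (F s) * w s
        = (f s * Real.exp (F s)) * w 0 + (f s * Real.exp (F s)) * W s
      rw [hs]
      show f s * Real.exp (F s) * (w 0 + W s) = _
      ring
    have c4 : ∫ s, ((f s * Real.exp (F s)) * w 0 + (f s * Real.exp (F s)) * W s) ∂ν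
        = (∫ s, f s * Real.exp (F s) ∂ν) * w 0 + ∫ s, (f s * Real.exp (F s)) * W s ∂ν := by
      rw [integral_add ((primExpInt hm h0 hi b).mul_const (w 0)) IW, integral_mul_const]
    have c5 : ∫ s, (f s * Real.exp (F s)) * W s ∂ν
        = ∫ u in Ioc (0:ℝ) b, w'' u * ∫ s in Ioc u b, f s * Real.exp (F s) := by
      rw [hν]
      exact triangle_swap (primExpInt hm h0 hi b) hw''i.integrableOn
    have c6 : ∫ u in Ioc (0:ℝ) b, w'' u * ∫ s in Ioc u b, f s * Real.exp (F s)
        = ∫ u in Ioc (0:ℝ) b, (w' u * Real.exp (F b) - w' u * Real.exp (F u)) := by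
      refine setIntegral_congr_fun measurableSet_Ioc fun u hu => ?_
      show w'' u * (∫ s in Ioc u b, f s * Real.exp (F s)) = _
      rw [step5 u hu, hw'', indicator_of_mem hu]
      ring
    have I4 : Integrable (fun u => w' u * Real.exp (F u)) ν :=
      I1.congr (Filter.Eventually.of_forall fun s => mul_comm _ _)
    have c7 : ∫ u in Ioc (0:ℝ) b, (w' u * Real.exp (F b) - w' u * Real.exp (F u))
        = (∫ u in Ioc (0:ℝ) b, w' u) * Real.exp (F b)
          - ∫ u in Ioc (0:ℝ) b, w' u * Real.exp (F u) := by
      rw [← hν, integral_sub (hw'i.mul_const _) I4, integral_mul_const]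
    have c8 : ∫ u in Ioc (0:ℝ) b, w' u = w b - w 0 := by
      have := hw b ⟨hb, le_refl b⟩
      linarith
    have c9 : (∫ s, f s * Real.exp (F s) ∂ν) = Real.exp (F b) - 1 := by
      rw [hν]
      exact primExp hm h0 hi b
    have c10 : ∫ s, Real.exp (F s) * w' s ∂ν = ∫ u in Ioc (0:ℝ) b, w' u * Real.exp (F u) :=
      integral_congr_ae (Filter.Eventually.of_forall fun s => mul_comm _ _)
    rw [c1, c2, c3, c4, c5, c6, c7, c8, c9, c10]
    ring
  show w b * Real.exp (F b) = w 0 + ∫ s in Ioc (0:ℝ) b, Real.exp (F s) * φ0 s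
  linarith [main]

end Prim


/-- under (H1), (H2), for `p,q ∈ [0,1]` and `λ > ‖β‖_∞ − μ₀`, if
`φ ∈ X⁺` (componentwise nonnegative a.e.) and `ψ` solves the resolvent problem
`ψᵢ′ + (λ+μ)ψᵢ = φᵢ`, `ψ(0) = 𝓑ψ`, then `ψ ∈ X⁺`: the resolvent operator
`R(λ, A₁+A₂)` is positive. -/
theorem resolvent_positive (ω : ℝ) (hω : 0 < ω)
    (β γ δ μf : ℝ → ℝ) (Mβ β₀ γ₀ δ₀ μ₀ : ℝ)
    (hβmeas : Measurable β) (hMβ : IsEssSupOn ω β Mβ)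
    (hβ₀ : IsEssInfOn ω β β₀) (hβ₀pos : 0 < β₀)
    (hγmeas : Measurable γ) (hMγ : ∃ Mγ, IsEssSupOn ω γ Mγ)
    (hγ₀ : IsEssInfOn ω γ γ₀) (hγ₀pos : 0 < γ₀)
    (hδmeas : Measurable δ) (hMδ : ∃ Mδ, IsEssSupOn ω δ Mδ)
    (hδ₀ : IsEssInfOn ω δ δ₀) (hδ₀pos : 0 < δ₀)
    (hμmeas : Measurable μf)
    (hμloc : ∀ b : ℝ, 0 ≤ b → b < ω → IntegrableOn μf (Icc 0 b))
    (hμ₀ : IsEssInfOn ω μf μ₀) (hμ₀pos : 0 < μ₀)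
    (hμinf : ∫⁻ a in Icc (0:ℝ) ω, ENNReal.ofReal (μf a) = ⊤)
    (p q : ℝ) (hp : p ∈ Icc (0:ℝ) 1) (hq : q ∈ Icc (0:ℝ) 1)
    (l : ℝ) (hl : Mβ - μ₀ < l)
    (φ : ℝ → Fin 3 → ℝ) (hφ : IntegrableOn φ (Icc 0 ω))
    (hφpos : ∀ᵐ a ∂(volume.restrict (Icc (0:ℝ) ω)), ∀ i : Fin 3, 0 ≤ φ a i)
    (ψ : ℝ → Fin 3 → ℝ) (hψ : ResolventSol ω p q l β μf φ ψ) :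
    ∀ᵐ a ∂(volume.restrict (Icc (0:ℝ) ω)), ∀ i : Fin 3, 0 ≤ ψ a i := by
  obtain ⟨ψ', hψ'i, hψAC, hψi, hμψi, hode, hbc⟩ := hψ
  -- finiteness and nontriviality of the base measure
  haveI : IsFiniteMeasure (volume.restrict (Icc (0:ℝ) ω)) :=
    ⟨by rw [Measure.restrict_apply_univ]; exact measure_Icc_lt_top⟩
  have hμres_ne : volume.restrict (Icc (0:ℝ) ω) ≠ 0 := by
    intro h
    have h2 : (volume.restrict (Icc (0:ℝ) ω)) (Icc 0 ω) = 0 := by rw [h]; rfl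
    rw [Measure.restrict_apply_self, Real.volume_Icc] at h2
    rw [ENNReal.ofReal_eq_zero] at h2
    linarith
  haveI : Filter.NeBot (ae (volume.restrict (Icc (0:ℝ) ω))) := ae_neBot.mpr hμres_ne
  have hMββ₀ : β₀ ≤ Mβ := by
    obtain ⟨a, h1, h2⟩ := (hMβ.1.and hβ₀.1).exists
    exact h2.trans ((le_abs_self _).trans h1)
  have hMβpos : 0 < Mβ := lt_of_lt_of_le hβ₀pos hMββ₀
  have hcpos : 0 < l + μ₀ := by linarith
  have hMβl : Mβ < l + μ₀ := by linarith
  -- the (truncated) coefficient function g = max (l + μ) 0 and its primitive G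
  set g : ℝ → ℝ := fun s => max (l + μf s) 0 with hgdef
  have hgmeas : Measurable g := (measurable_const.add hμmeas).max measurable_const
  have hg0 : ∀ s, 0 ≤ g s := fun s => le_max_right _ _
  have hgae : ∀ᵐ s ∂(volume.restrict (Icc (0:ℝ) ω)), g s = l + μf s := by
    filter_upwards [hμ₀.1] with s hs
    exact max_eq_left (by linarith)
  have hgae2 : ∀ᵐ s ∂(volume.restrict (Icc (0:ℝ) ω)), l + μ₀ ≤ g s := by
    filter_upwards [hμ₀.1] with s hs
    exact le_trans (by linarith) (le_max_left _ _)
  have hgint : ∀ b : ℝ, 0 ≤ b → b < ω → IntegrableOn g (Icc 0 b) := by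
    intro b hb hbω
    have h1 : IntegrableOn (fun s => l + μf s) (Icc 0 b) :=
      (integrable_const l).add (hμloc b hb hbω)
    exact h1.sup (integrable_const 0)
  set G : ℝ → ℝ := fun a => ∫ s in Ioc (0:ℝ) a, g s with hGdef
  have hG0 : ∀ a, 0 ≤ G a := fun a =>
    setIntegral_nonneg measurableSet_Ioc fun x _ => hg0 x
  have hEpos : ∀ a, 0 < Real.exp (-(G a)) := fun a => Real.exp_pos _
  have hE1 : ∀ a, Real.exp (-(G a)) ≤ 1 := fun a =>
    Real.exp_le_one_iff.mpr (neg_nonpos.mpr (hG0 a))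
  -- a.e. point of Icc 0 ω lies in Ico 0 ω
  have hae_Ico : ∀ᵐ a ∂(volume.restrict (Icc (0:ℝ) ω)), a ∈ Ico (0:ℝ) ω := by
    have h1 : ∀ᵐ a ∂(volume.restrict (Icc (0:ℝ) ω)), a ∈ Icc (0:ℝ) ω :=
      ae_restrict_mem measurableSet_Icc
    have h2 : ∀ᵐ a ∂(volume.restrict (Icc (0:ℝ) ω)), a ≠ ω := by
      refine ae_restrict_of_ae ?_
      have hset : {a : ℝ | ¬ a ≠ ω} = {ω} := by ext x; simp
      rw [ae_iff, hset]
      exact measure_singleton ω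
    filter_upwards [h1, h2] with a ha hne
    exact ⟨ha.1, lt_of_le_of_ne ha.2 hne⟩
  -- component integrability helper
  have hcomp : ∀ (FF : ℝ → Fin 3 → ℝ), IntegrableOn FF (Icc 0 ω) →
      ∀ i : Fin 3, IntegrableOn (fun s => FF s i) (Icc 0 ω) := by
    intro FF hFF i
    refine Integrable.mono' hFF.norm
      ((continuous_apply i).comp_aestronglyMeasurable hFF.aestronglyMeasurable) ?_
    exact Filter.Eventually.of_forall fun s => norm_le_pi_norm (FF s) i
  -- key lower-bound formula from the ODE
  have key : ∀ a ∈ Ico (0:ℝ) ω, ∀ i : Fin 3, ψ 0 i ≤ ψ a i * Real.exp (G a) := by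
    intro a ha i
    set fA : ℝ → ℝ := (Icc (0:ℝ) a).indicator g with hfA
    have hfAmeas : Measurable fA := hgmeas.indicator measurableSet_Icc
    have hfA0 : ∀ s, 0 ≤ fA s := fun s => by
      rw [hfA]
      by_cases hs : s ∈ Icc (0:ℝ) a
      · rw [indicator_of_mem hs]; exact hg0 s
      · rw [indicator_of_notMem hs]
    have hfAint : Integrable fA :=
      (hgint a ha.1 ha.2).integrable_indicator measurableSet_Icc
    have hFA : ∀ s ∈ Icc (0:ℝ) a, (∫ u in Ioc (0:ℝ) s, fA u) = G s := by
      intro s hs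
      show ∫ u in Ioc (0:ℝ) s, (Icc (0:ℝ) a).indicator g u = _
      rw [setIntegral_indicator measurableSet_Icc,
        inter_eq_left.mpr (fun x hx => mem_Icc.mpr ⟨hx.1.le, hx.2.trans hs.2⟩)]
    have hsub : Ioc (0:ℝ) a ⊆ Icc (0:ℝ) ω :=
      fun x hx => mem_Icc.mpr ⟨hx.1.le, hx.2.trans ha.2.le⟩
    have hODE : ∀ᵐ s ∂(volume.restrict (Ioc (0:ℝ) a)),
        ψ' s i + fA s * ψ s i = φ s i := by
      filter_upwards [ae_restrict_of_ae_restrict_of_subset hsub (hode i),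
        ae_restrict_of_ae_restrict_of_subset hsub hgae,
        ae_restrict_mem measurableSet_Ioc] with s hs1 hs2 hs3
      have : fA s = g s := indicator_of_mem (mem_Icc.mpr ⟨hs3.1.le, hs3.2⟩) g
      rw [this, hs2]
      exact hs1
    have hform := primProd hfAmeas hfA0 hfAint ha.1
      (w := fun s => ψ s i) (w' := fun s => ψ' s i) (φ0 := fun s => φ s i)
      (((hcomp ψ' hψ'i i).mono_set hsub))
      (by
        intro s hs
        have h1 := hψAC i s ⟨hs.1, hs.2.trans ha.2.le⟩
        rwa [intervalIntegral.integral_of_le hs.1] at h1)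
      (((hcomp φ hφ i).mono_set hsub))
      hODE
    rw [hFA a ⟨ha.1, le_refl a⟩] at hform
    have hnn : 0 ≤ ∫ s in Ioc (0:ℝ) a, Real.exp (∫ u in Ioc (0:ℝ) s, fA u) * φ s i := by
      refine integral_nonneg_of_ae ?_
      filter_upwards [ae_restrict_of_ae_restrict_of_subset hsub hφpos] with s hs
      exact mul_nonneg (Real.exp_pos _).le (hs i)
    linarith [hform]
  -- pointwise lower bound by the negative part of the boundary value
  set m : Fin 3 → ℝ := fun i => min (ψ 0 i) 0 with hmdef
  have hm_le : ∀ i, m i ≤ 0 := fun i => min_le_right _ _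
  have hm_leψ : ∀ i, m i ≤ ψ 0 i := fun i => min_le_left _ _
  have hlowpt : ∀ a ∈ Ico (0:ℝ) ω, ∀ i : Fin 3,
      m i * Real.exp (-(G a)) ≤ ψ a i := by
    intro a ha i
    have h1 : m i ≤ ψ a i * Real.exp (G a) := le_trans (hm_leψ i) (key a ha i)
    have h2 := mul_le_mul_of_nonneg_right h1 (hEpos a).le
    calc m i * Real.exp (-(G a)) ≤ ψ a i * Real.exp (G a) * Real.exp (-(G a)) := h2
      _ = ψ a i := by
          rw [mul_assoc, ← Real.exp_add, add_neg_cancel, Real.exp_zero, mul_one]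
  -- measurability of E := exp (-(G ·)) on [0,ω]
  have hEmeas : AEStronglyMeasurable (fun a => Real.exp (-(G a)))
      (volume.restrict (Icc (0:ℝ) ω)) := by
    set Gt : ℝ → ℝ := fun a => (∫⁻ s in Ioc (0:ℝ) a, ENNReal.ofReal (g s)).toReal with hGt
    have hGtmono : Monotone (fun a => ∫⁻ s in Ioc (0:ℝ) a, ENNReal.ofReal (g s)) := by
      intro x y hxy
      exact lintegral_mono' (Measure.restrict_mono (Ioc_subset_Ioc_right hxy) le_rfl) le_rfl
    have hGtmeas : Measurable Gt := ENNReal.measurable_toReal.comp hGtmono.measurable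
    have hGeq : ∀ᵐ a ∂(volume.restrict (Icc (0:ℝ) ω)),
        Real.exp (-(Gt a)) = Real.exp (-(G a)) := by
      filter_upwards [hae_Ico] with a ha
      have : G a = Gt a := by
        rw [hGdef]
        show ∫ s in Ioc (0:ℝ) a, g s = _
        rw [integral_eq_lintegral_of_nonneg_ae
          (Filter.Eventually.of_forall fun s => hg0 s) hgmeas.aestronglyMeasurable]
      rw [this]
    exact ((Real.measurable_exp.comp hGtmeas.neg).aestronglyMeasurable).congr hGeq
  -- lower bound on G on [0,ω)
  have hGlb : ∀ a ∈ Ico (0:ℝ) ω, (l + μ₀) * a ≤ G a := by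
    intro a ha
    have hint : IntegrableOn g (Ioc 0 a) :=
      (hgint a ha.1 ha.2).mono_set Ioc_subset_Icc_self
    have hsub : Ioc (0:ℝ) a ⊆ Icc (0:ℝ) ω :=
      fun x hx => mem_Icc.mpr ⟨hx.1.le, hx.2.trans ha.2.le⟩
    have hmono := integral_mono_ae (integrable_const (l + μ₀)) hint
      (ae_restrict_of_ae_restrict_of_subset hsub hgae2)
    rw [setIntegral_const] at hmono
    rw [Real.volume_real_Ioc_of_le ha.1, sub_zero, smul_eq_mul] at hmono
    show (l + μ₀) * a ≤ ∫ s in Ioc (0:ℝ) a, g s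
    linarith [hmono]
  -- the contraction constant θ
  set θ : ℝ := ∫ a in Icc (0:ℝ) ω, β a * Real.exp (-(G a)) with hθdef
  have hθint : IntegrableOn (fun a => β a * Real.exp (-(G a))) (Icc 0 ω) := by
    refine Integrable.mono' (integrable_const Mβ)
      (hβmeas.aestronglyMeasurable.mul hEmeas) ?_
    filter_upwards [hMβ.1] with a ha
    rw [Real.norm_eq_abs, abs_mul, abs_of_nonneg (hEpos a).le]
    calc |β a| * Real.exp (-(G a)) ≤ Mβ * 1 :=
          mul_le_mul ha (hE1 a) (hEpos a).le (le_trans (abs_nonneg _) ha)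
      _ = Mβ := mul_one Mβ
  have hθ0 : 0 ≤ θ := by
    refine integral_nonneg_of_ae ?_
    filter_upwards [hβ₀.1] with a ha
    exact mul_nonneg (le_trans hβ₀pos.le ha) (hEpos a).le
  have hθlt : θ < 1 := by
    have hexpint : ∫ a in Icc (0:ℝ) ω, Real.exp (-((l+μ₀) * a))
        = (1 - Real.exp (-((l+μ₀)*ω)))/(l+μ₀) := by
      rw [integral_Icc_eq_integral_Ioc, ← intervalIntegral.integral_of_le hω.le]
      have hder : ∀ x ∈ uIcc (0:ℝ) ω,
          HasDerivAt (fun x => -Real.exp (-((l+μ₀)*x))/(l+μ₀))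
            (Real.exp (-((l+μ₀)*x))) x := by
        intro x _
        have h1 : HasDerivAt (fun x : ℝ => -((l+μ₀)*x)) (-(l+μ₀)) x := by
          exact (((hasDerivAt_id x).const_mul (l+μ₀)).neg).congr_deriv (by ring)
        have h2 := h1.exp
        have h3 := (h2.div_const (l+μ₀)).neg
        have hne : (l+μ₀) ≠ 0 := ne_of_gt hcpos
        have h4 := h3.congr_deriv (show _ = Real.exp (-((l+μ₀)*x)) by
          rw [mul_neg, neg_div, neg_neg, mul_div_assoc, div_self hne, mul_one])
        refine h4.congr_of_eventuallyEq (Filter.Eventually.of_forall fun y => ?_)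
        show -Real.exp (-((l+μ₀)*y))/(l+μ₀) = -(Real.exp (-((l+μ₀)*y))/(l+μ₀))
        ring
      have hcont : Continuous fun x : ℝ => Real.exp (-((l+μ₀)*x)) :=
        Real.continuous_exp.comp ((continuous_const.mul continuous_id).neg)
      rw [intervalIntegral.integral_eq_sub_of_hasDerivAt hder
        (hcont.intervalIntegrable 0 ω)]
      rw [mul_zero, neg_zero, Real.exp_zero]
      ring
    have hcompare : θ ≤ Mβ * ((1 - Real.exp (-((l+μ₀)*ω)))/(l+μ₀)) := by
      have hcont : Continuous fun a : ℝ => Mβ * Real.exp (-((l+μ₀)*a)) :=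
        continuous_const.mul (Real.continuous_exp.comp
          ((continuous_const.mul continuous_id).neg))
      have hmono := integral_mono_ae hθint (hcont.integrableOn_Icc) ?_
      · rw [integral_const_mul, hexpint] at hmono
        exact hmono
      · filter_upwards [hMβ.1, hae_Ico] with a h1 h2
        calc β a * Real.exp (-(G a)) ≤ Mβ * Real.exp (-(G a)) :=
              mul_le_mul_of_nonneg_right ((le_abs_self _).trans h1) (hEpos a).le
          _ ≤ Mβ * Real.exp (-((l+μ₀)*a)) := by
              refine mul_le_mul_of_nonneg_left ?_ hMβpos.le
              exact Real.exp_le_exp.mpr (neg_le_neg (hGlb a h2))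
    have hexppos : 0 < Real.exp (-((l+μ₀)*ω)) := Real.exp_pos _
    have h6 : Mβ * ((1 - Real.exp (-((l+μ₀)*ω)))/(l+μ₀)) < Mβ / (l+μ₀) := by
      have h6' : Mβ * (1 - Real.exp (-((l+μ₀)*ω))) < Mβ := by nlinarith
      calc Mβ * ((1 - Real.exp (-((l+μ₀)*ω)))/(l+μ₀))
          = Mβ * (1 - Real.exp (-((l+μ₀)*ω))) / (l+μ₀) := by ring
        _ < Mβ / (l+μ₀) := by gcongr
    have h7 : Mβ / (l+μ₀) < 1 := (div_lt_one hcpos).mpr hMβl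
    linarith
  -- integrability of components and of β·ψⱼ
  have hψc : ∀ i : Fin 3, IntegrableOn (fun a => ψ a i) (Icc 0 ω) := hcomp ψ hψi
  have hβψ : ∀ i : Fin 3, IntegrableOn (fun a => β a * ψ a i) (Icc 0 ω) := by
    intro i
    refine Integrable.mono' ((hψc i).norm.const_mul Mβ)
      (hβmeas.aestronglyMeasurable.mul (hψc i).aestronglyMeasurable) ?_
    filter_upwards [hMβ.1] with a ha
    rw [Real.norm_eq_abs, abs_mul]
    exact mul_le_mul_of_nonneg_right ha (abs_nonneg _)
  -- the key integral estimate: θ * m j ≤ ∫ β ψⱼ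
  have hlowint : ∀ j : Fin 3, θ * m j ≤ ∫ a in Icc (0:ℝ) ω, β a * ψ a j := by
    intro j
    have hmono := integral_mono_ae (hθint.mul_const (m j)) (hβψ j) ?_
    · rw [integral_mul_const] at hmono
      exact hmono
    · filter_upwards [hβ₀.1, hae_Ico] with a h1 h2
      have hψlow := hlowpt a h2 j
      calc (β a * Real.exp (-(G a))) * m j = β a * (m j * Real.exp (-(G a))) := by ring
        _ ≤ β a * ψ a j :=
            mul_le_mul_of_nonneg_left hψlow (le_trans hβ₀pos.le h1)
  -- boundary condition components
  have h00 : ψ 0 0 = ∫ a in Icc (0:ℝ) ω, β a * (ψ a 0 + (1-p) * ψ a 1 + (1-q) * ψ a 2) := by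
    rw [hbc]; rfl
  have h01 : ψ 0 1 = ∫ a in Icc (0:ℝ) ω, p * (β a * ψ a 1) := by
    rw [hbc]; rfl
  have h02 : ψ 0 2 = ∫ a in Icc (0:ℝ) ω, q * (β a * ψ a 2) := by
    rw [hbc]; rfl
  -- estimates on boundary values
  have hb1 : p * (θ * m 1) ≤ ψ 0 1 := by
    rw [h01, integral_const_mul]
    exact mul_le_mul_of_nonneg_left (hlowint 1) hp.1
  have hb2 : q * (θ * m 2) ≤ ψ 0 2 := by
    rw [h02, integral_const_mul]
    exact mul_le_mul_of_nonneg_left (hlowint 2) hq.1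
  have hb0 : θ * m 0 + (1-p) * (θ * m 1) + (1-q) * (θ * m 2) ≤ ψ 0 0 := by
    rw [h00]
    have hsplit : (fun a => β a * (ψ a 0 + (1-p) * ψ a 1 + (1-q) * ψ a 2))
        = fun a => β a * ψ a 0 + ((1-p) * (β a * ψ a 1) + (1-q) * (β a * ψ a 2)) := by
      funext a; ring
    have hI1 : IntegrableOn (fun a => (1-p) * (β a * ψ a 1) + (1-q) * (β a * ψ a 2))
        (Icc 0 ω) := ((hβψ 1).const_mul (1-p)).add ((hβψ 2).const_mul (1-q))
    rw [hsplit, integral_add (hβψ 0) hI1,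
      integral_add ((hβψ 1).const_mul (1-p)) ((hβψ 2).const_mul (1-q)),
      integral_const_mul, integral_const_mul]
    have e1 := hlowint 0
    have e2 := mul_le_mul_of_nonneg_left (hlowint 1) (by linarith [hp.2] : (0:ℝ) ≤ 1-p)
    have e3 := mul_le_mul_of_nonneg_left (hlowint 2) (by linarith [hq.2] : (0:ℝ) ≤ 1-q)
    linarith
  -- deduce m ≡ 0 via the contraction estimate
  have hm0 : θ * m 0 + (1-p) * (θ * m 1) + (1-q) * (θ * m 2) ≤ m 0 := by
    refine le_min hb0 ?_
    have t1 : θ * m 0 ≤ 0 := mul_nonpos_of_nonneg_of_nonpos hθ0 (hm_le 0)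
    have t2 : θ * m 1 ≤ 0 := mul_nonpos_of_nonneg_of_nonpos hθ0 (hm_le 1)
    have t3 : θ * m 2 ≤ 0 := mul_nonpos_of_nonneg_of_nonpos hθ0 (hm_le 2)
    have t4 : (1-p) * (θ * m 1) ≤ 0 :=
      mul_nonpos_of_nonneg_of_nonpos (by linarith [hp.2]) t2
    have t5 : (1-q) * (θ * m 2) ≤ 0 :=
      mul_nonpos_of_nonneg_of_nonpos (by linarith [hq.2]) t3
    linarith
  have hm1 : p * (θ * m 1) ≤ m 1 := by
    refine le_min hb1 ?_
    have t2 : θ * m 1 ≤ 0 := mul_nonpos_of_nonneg_of_nonpos hθ0 (hm_le 1)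
    exact mul_nonpos_of_nonneg_of_nonpos hp.1 t2
  have hm2 : q * (θ * m 2) ≤ m 2 := by
    refine le_min hb2 ?_
    have t3 : θ * m 2 ≤ 0 := mul_nonpos_of_nonneg_of_nonpos hθ0 (hm_le 2)
    exact mul_nonpos_of_nonneg_of_nonpos hq.1 t3
  have hsum : θ * (m 0 + m 1 + m 2) ≤ m 0 + m 1 + m 2 := by
    have e : θ * m 0 + (1-p) * (θ * m 1) + (1-q) * (θ * m 2)
        + p * (θ * m 1) + q * (θ * m 2) = θ * (m 0 + m 1 + m 2) := by ring
    linarith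
  have hSnn : 0 ≤ m 0 + m 1 + m 2 := by
    by_contra hcon
    push_neg at hcon
    have : θ * (m 0 + m 1 + m 2) > m 0 + m 1 + m 2 := by nlinarith
    linarith
  have hmge : ∀ i : Fin 3, 0 ≤ m i := by
    have g0 : 0 ≤ m 0 := by linarith [hm_le 1, hm_le 2]
    have g1 : 0 ≤ m 1 := by linarith [hm_le 0, hm_le 2]
    have g2 : 0 ≤ m 2 := by linarith [hm_le 0, hm_le 1]
    intro i
    fin_cases i
    · exact g0
    · exact g1
    · exact g2
  -- conclusion
  filter_upwards [hae_Ico] with a ha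
  intro i
  have h1 := hlowpt a ha i
  have h2 : 0 ≤ m i * Real.exp (-(G a)) := mul_nonneg (hmge i) (hEpos a).le
  linarith

end
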